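/- Let r ∈ ℕ and let x : [0,1] → ℝ^n be (r+2)-times continuously differentiable. Then there exist constants C_0,…,C_r > 0, independent of N, such that for every N ∈ ℕ large enough and every t ∈ [0,1] and every 0 ≤ s ≤ r, the s-th derivative of the Bernstein approximation satisfies ‖(B_N x)^{(s)}(t) − x^{(s)}(t)‖ ≤ C_s / N. -/

import Mathlib

open scoped BigOperators

/-- The Bernstein basis polynomial `b_{j,N}(t) = C(N,j) t^j (1-t)^(N-j)`. -/
noncomputable def bern (N j : ℕ) (t : ℝ) : ℝ :=
  (N.choose j : ℝ) * t ^ j * (1 - t) ^ (N - j)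

/-- The `N`-th Bernstein approximation of `g : [0,1] → E`. -/
noncomputable def bapprox {E : Type*} [AddCommMonoid E] [Module ℝ E]
    (N : ℕ) (g : ℝ → E) (t : ℝ) : E :=
  ∑ j : Fin (N + 1), bern N (j : ℕ) t • g (((j : ℕ) : ℝ) / (N : ℝ))

section BernsteinAux

noncomputable def fdiff {E : Type*} [AddCommGroup E] (h : ℝ) (g : ℝ → E) : ℝ → E :=
  fun u => g (u + h) - g u

open Set Finset

lemma bern_eval (M j : ℕ) (t : ℝ) :
    (bernsteinPolynomial ℝ M j).eval t = bern M j t := by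
  simp [bernsteinPolynomial, bern]

lemma bern_nonneg {M j : ℕ} {t : ℝ} (h0 : 0 ≤ t) (h1 : t ≤ 1) : 0 ≤ bern M j t := by
  have h2 : (0:ℝ) ≤ 1 - t := by linarith
  exact mul_nonneg (mul_nonneg (Nat.cast_nonneg _) (pow_nonneg h0 _)) (pow_nonneg h2 _)

lemma bern_sum (M : ℕ) (t : ℝ) : ∑ j ∈ range (M+1), bern M j t = 1 := by
  have := congrArg (Polynomial.eval t) (bernsteinPolynomial.sum ℝ M)
  simpa [Polynomial.eval_finset_sum, bern_eval] using this

lemma bern_sum_smul (M : ℕ) (t : ℝ) :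
    ∑ j ∈ range (M+1), (j:ℝ) * bern M j t = M * t := by
  have := congrArg (Polynomial.eval t) (bernsteinPolynomial.sum_smul ℝ M)
  simpa [Polynomial.eval_finset_sum, bern_eval, nsmul_eq_mul] using this

lemma bern_sum_mul_smul (M : ℕ) (t : ℝ) :
    ∑ j ∈ range (M+1), ((j:ℝ) * ((j:ℝ) - 1)) * bern M j t = (M:ℝ) * ((M:ℝ) - 1) * t^2 := by
  have := congrArg (Polynomial.eval t) (bernsteinPolynomial.sum_mul_smul ℝ M)
  rw [Polynomial.eval_finset_sum] at this
  simp only [nsmul_eq_mul, Polynomial.eval_mul, Polynomial.eval_natCast, Polynomial.eval_pow,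
    Polynomial.eval_X, bern_eval, Nat.cast_mul] at this
  rw [show (∑ j ∈ range (M+1), ((j:ℝ) * ((j:ℝ) - 1)) * bern M j t)
      = ∑ j ∈ range (M+1), (j:ℝ) * ((j-1 : ℕ) : ℝ) * bern M j t from ?_]
  · rw [this]
    rcases M with _ | M
    · simp
    · push_cast [Nat.succ_sub_one]; ring
  · refine Finset.sum_congr rfl fun j _ => ?_
    rcases j with _ | j
    · simp
    · push_cast [Nat.succ_sub_one]; ring

lemma bern_variance (M : ℕ) (t : ℝ) :
    ∑ j ∈ range (M+1), bern M j t * ((j:ℝ) - M*t)^2 = (M:ℝ) * t * (1-t) := by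
  have e1 := bern_sum M t
  have e2 := bern_sum_smul M t
  have e3 := bern_sum_mul_smul M t
  have expand : ∀ j ∈ range (M+1), bern M j t * ((j:ℝ) - M*t)^2
      = ((j:ℝ) * ((j:ℝ)-1)) * bern M j t + (1 - 2*(M:ℝ)*t) * ((j:ℝ) * bern M j t)
        + ((M:ℝ)^2*t^2) * bern M j t := by
    intro j _; ring
  rw [Finset.sum_congr rfl expand, Finset.sum_add_distrib, Finset.sum_add_distrib,
    ← Finset.mul_sum, ← Finset.mul_sum, e1, e2, e3]
  ring
section DerivB
variable {E : Type*} [NormedAddCommGroup E] [NormedSpace ℝ E]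

lemma hasDerivAt_one_sub_pow (k : ℕ) (t : ℝ) :
    HasDerivAt (fun t : ℝ => (1 - t) ^ k) (-(k * (1 - t) ^ (k - 1))) t := by
  have h1 : HasDerivAt (fun t : ℝ => 1 - t) (-1) t := by
    simpa using ((hasDerivAt_id t).const_sub 1)
  have := (hasDerivAt_pow k (1 - t)).comp t h1
  refine this.congr_deriv (Eq.symm ?_)
  ring

lemma hasDerivAt_bern (M j : ℕ) (hM : 1 ≤ M) (hj : j ≤ M) (t : ℝ) :
    HasDerivAt (fun t => bern M j t)
      ((M:ℝ) * ((if j = 0 then 0 else bern (M-1) (j-1) t) - bern (M-1) j t)) t := by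
  rcases Nat.eq_zero_or_pos j with (rfl | hj0)
  · -- j = 0 : bern M 0 t = (1-t)^M
    have h : HasDerivAt (fun t : ℝ => (1 - t) ^ M) (-(M * (1 - t) ^ (M - 1))) t :=
      hasDerivAt_one_sub_pow M t
    have : (fun t : ℝ => bern M 0 t) = fun t : ℝ => (1 - t) ^ M := by
      funext t; simp [bern]
    rw [this]
    convert h using 1
    simp [bern, Nat.choose_zero_right]
  · rcases eq_or_lt_of_le hj with (rfl | hjM)
    · -- j = M : bern j j t = t^j
      have h := hasDerivAt_pow j t
      have hfun : (fun t : ℝ => bern j j t) = fun t : ℝ => t ^ j := by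
        funext t; simp [bern]
      rw [hfun]
      refine h.congr_deriv (Eq.symm ?_)
      have h0 : ¬ (j = 0) := by omega
      simp only [if_neg h0, bern]
      rw [Nat.choose_self, Nat.choose_eq_zero_of_lt (by omega : j - 1 < j)]
      have e1 : j - 1 - (j - 1) = 0 := by omega
      have e2 : j - 1 - j = 0 := by omega
      rw [e1, e2]
      push_cast
      ring
    · -- 1 ≤ j < M
      obtain ⟨j', rfl⟩ : ∃ j', j = j' + 1 := ⟨j - 1, by omega⟩
      obtain ⟨m, hm⟩ : ∃ m, M - (j'+1) = m + 1 := ⟨M - (j'+1) - 1, by omega⟩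
      have hMj : M - (j'+1) = m + 1 := hm
      have h1 : HasDerivAt (fun t : ℝ => t ^ (j'+1)) (((j':ℝ)+1) * t ^ j') t := by
        simpa using hasDerivAt_pow (j'+1) t
      have h2 : HasDerivAt (fun t : ℝ => (1 - t) ^ (m+1)) (-((m+1) * (1 - t) ^ m)) t := by
        simpa using hasDerivAt_one_sub_pow (m+1) t
      have h3 := (h1.mul h2).const_mul ((M.choose (j'+1) : ℝ))
      have hfun : (fun t : ℝ => bern M (j'+1) t)
          = fun t : ℝ => (M.choose (j'+1) : ℝ) * (t ^ (j'+1) * (1 - t) ^ (m+1)) := by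
        funext t; rw [bern, hMj]; ring
      rw [hfun]
      refine h3.congr_deriv (Eq.symm ?_)
      have e0 : ¬ (j' + 1 = 0) := by omega
      rw [if_neg e0]
      simp only [bern, Nat.add_sub_cancel]
      -- choose identities
      have c1 : (M:ℝ) * ((M-1).choose j' : ℝ) = ((M.choose (j'+1)) : ℝ) * (j'+1) := by
        have h4 := Nat.add_one_mul_choose_eq (M-1) j'
        rw [(by omega : M - 1 + 1 = M)] at h4
        exact_mod_cast congrArg (Nat.cast : ℕ → ℝ) h4
      have c2 : (M:ℝ) * ((M-1).choose (j'+1) : ℝ) = ((M.choose (j'+1)) : ℝ) * (m+1) := by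
        have e1 := Nat.add_one_mul_choose_eq (M-1) (j'+1)
        rw [(by omega : M - 1 + 1 = M)] at e1
        -- e1 : M * (M-1).choose (j'+1) = M.choose (j'+2) * (j'+2)
        have e2 := Nat.choose_succ_right_eq M (j'+1)
        have e3 : M * (M - 1).choose (j'+1) = M.choose (j'+1) * (m+1) := by
          rw [e1, e2, hMj]
        exact_mod_cast congrArg (Nat.cast : ℕ → ℝ) e3
      have hm1j : M - 1 - j' = m + 1 := by omega
      have hm1j1 : M - 1 - (j'+1) = m := by omega
      rw [hm1j, hm1j1]
      linear_combination (t^j' * (1-t)^(m+1)) * c1 - (t^(j'+1) * (1-t)^m) * c2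

end DerivB
section LemD
variable {E : Type*} [NormedAddCommGroup E] [NormedSpace ℝ E]

lemma hasDerivAt_bern_sum (M : ℕ) (hM : 1 ≤ M) (c : ℕ → E) (t : ℝ) :
    HasDerivAt (fun t => ∑ j ∈ Finset.range (M+1), bern M j t • c j)
      ((M:ℝ) • ∑ j ∈ Finset.range M, bern (M-1) j t • (c (j+1) - c j)) t := by
  have key : HasDerivAt (fun t => ∑ j ∈ Finset.range (M+1), bern M j t • c j)
      (∑ j ∈ Finset.range (M+1),
        ((M:ℝ) * ((if j = 0 then 0 else bern (M-1) (j-1) t) - bern (M-1) j t)) • c j) t := by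
    apply HasDerivAt.fun_sum
    intro j hj
    exact (hasDerivAt_bern M j hM (by simp at hj; omega) t).smul_const (c j)
  convert key using 1
  have split : ∀ j ∈ Finset.range (M+1),
      ((M:ℝ) * ((if j = 0 then 0 else bern (M-1) (j-1) t) - bern (M-1) j t)) • c j
      = (M:ℝ) • (((if j = 0 then (0:ℝ) else bern (M-1) (j-1) t) • c j) - bern (M-1) j t • c j) := by
    intro j _
    rw [mul_smul, sub_smul]
  rw [Finset.sum_congr rfl split, ← Finset.smul_sum]
  congr 1
  rw [Finset.sum_sub_distrib]
  have e1 : ∑ j ∈ Finset.range (M+1), (if j = 0 then (0:ℝ) else bern (M-1) (j-1) t) • c j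
      = ∑ j ∈ Finset.range M, bern (M-1) j t • c (j+1) := by
    rw [Finset.sum_range_succ' _ M]
    simp
  have e2 : ∑ j ∈ Finset.range (M+1), bern (M-1) j t • c j
      = ∑ j ∈ Finset.range M, bern (M-1) j t • c j := by
    rw [Finset.sum_range_succ]
    have : bern (M-1) M t = 0 := by
      simp [bern, Nat.choose_eq_zero_of_lt (by omega : M - 1 < M)]
    rw [this]
    simp
  rw [e1, e2, ← Finset.sum_sub_distrib]
  exact Finset.sum_congr rfl fun j _ => smul_sub _ _ _

lemma lemA (N : ℕ) (f : ℝ → E) (s : ℕ) (hs : s ≤ N) :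
    iteratedDeriv s (bapprox N f) = fun t =>
      (∏ i ∈ Finset.range s, ((N:ℝ) - i)) •
        ∑ j ∈ Finset.range (N - s + 1), bern (N-s) j t • (fdiff (1/(N:ℝ)))^[s] f ((j:ℝ)/(N:ℝ)) := by
  induction s with
  | zero =>
    funext t
    simp only [iteratedDeriv_zero, bapprox, Finset.range_zero, Finset.prod_empty, one_smul,
      Nat.sub_zero, Function.iterate_zero_apply]
    exact Fin.sum_univ_eq_sum_range (fun j => bern N j t • f ((j:ℝ)/(N:ℝ))) (N+1)
  | succ s ih =>
    have hsN : s ≤ N := by omega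
    funext t
    rw [iteratedDeriv_succ, ih hsN]
    set M := N - s with hM
    have hM1 : 1 ≤ M := by omega
    set c : ℕ → E := fun j => (fdiff (1/(N:ℝ)))^[s] f ((j:ℝ)/(N:ℝ)) with hc
    have hkey := (hasDerivAt_bern_sum M hM1 c t).fun_const_smul (∏ i ∈ Finset.range s, ((N:ℝ) - i))
    rw [hkey.deriv]
    rw [smul_smul, Finset.prod_range_succ]
    have hcast : ((M:ℝ)) = (N:ℝ) - s := by
      rw [hM]; push_cast [Nat.cast_sub hsN]; ring
    rw [hcast]
    have hidx : M - 1 = N - (s+1) := by omega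
    have hidx2 : M - 1 + 1 = M := by omega
    congr 1
    rw [show Finset.range M = Finset.range (N - (s+1) + 1) by rw [← hidx, hidx2]]
    refine Finset.sum_congr rfl fun j hj => ?_
    rw [hidx]
    congr 1
    have h1j : (1:ℕ) + j = j + 1 := by omega
    try rw [h1j]
    rw [hc]
    show (fdiff (1/(N:ℝ)))^[s] f (((j+1:ℕ):ℝ)/(N:ℝ)) - (fdiff (1/(N:ℝ)))^[s] f ((j:ℝ)/(N:ℝ))
      = (fdiff (1/(N:ℝ)))^[s+1] f ((j:ℝ)/(N:ℝ))
    rw [Function.iterate_succ_apply']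
    show _ = (fdiff (1/(N:ℝ)))^[s] f ((j:ℝ)/(N:ℝ) + 1/(N:ℝ)) - (fdiff (1/(N:ℝ)))^[s] f ((j:ℝ)/(N:ℝ))
    congr 2
    have hN0 : (N:ℝ) ≠ 0 := by
      have : 0 < N := by omega
      exact_mod_cast this.ne'
    push_cast
    field_simp

end LemD
section FDiff
variable {E : Type*} [NormedAddCommGroup E] [NormedSpace ℝ E] [CompleteSpace E]

lemma fdiff_continuousOn {E : Type*} [NormedAddCommGroup E] (k : ℕ) (h : ℝ) (hh : 0 ≤ h) :
    ∀ (G : ℝ → E) (b : ℝ), ContinuousOn G (Set.Icc 0 b) →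
      ContinuousOn ((fdiff h)^[k] G) (Set.Icc 0 (b - k*h)) := by
  induction k with
  | zero => intro G b hG; simpa using hG.mono (Set.Icc_subset_Icc le_rfl (by simp))
  | succ k ih =>
    intro G b hG
    rw [Function.iterate_succ_apply]
    have hfd : ContinuousOn (fdiff h G) (Set.Icc 0 (b - h)) := by
      apply ContinuousOn.sub
      · exact hG.comp (continuous_id.add continuous_const).continuousOn
          (fun w hw => ⟨by simp at hw ⊢; linarith [hw.1], by simp at hw ⊢; linarith [hw.2]⟩)
      · exact hG.mono (Set.Icc_subset_Icc le_rfl (by linarith))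
    have := ih (fdiff h G) (b - h) hfd
    apply this.mono
    apply Set.Icc_subset_Icc le_rfl
    push_cast
    ring_nf
    exact le_rfl

lemma lemI (s : ℕ) (f φ : ℝ → E)
    (hφc : ContinuousOn φ (Set.Icc 0 1))
    (hfc : ContinuousOn f (Set.Icc 0 1))
    (hf : ∀ w ∈ Set.Icc (0:ℝ) 1, HasDerivWithinAt f (φ w) (Set.Icc 0 1) w)
    (h : ℝ) (hh : 0 < h) :
    ∀ u : ℝ, 0 ≤ u → u + (s+1)*h ≤ 1 →
      (fdiff h)^[s+1] f u = ∫ τ in (0:ℝ)..h, (fdiff h)^[s] φ (u + τ) := by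
  induction s with
  | zero =>
    intro u hu hub
    push_cast at hub
    simp only [Function.iterate_one, Function.iterate_zero_apply]
    have hub' : u + h ≤ 1 := by linarith
    have hsub : Set.Icc u (u+h) ⊆ Set.Icc (0:ℝ) 1 :=
      Set.Icc_subset_Icc hu hub'
    have key : ∫ y in u..(u+h), φ y = f (u+h) - f u := by
      apply intervalIntegral.integral_eq_sub_of_hasDeriv_right_of_le (by linarith)
        (hfc.mono hsub)
      · intro y hy
        have hy1 : y ∈ Set.Ioo (0:ℝ) 1 := ⟨by simp at hy; linarith [hy.1], by simp at hy; linarith [hy.2]⟩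
        have : HasDerivAt f (φ y) y := by
          have := hf y (Set.mem_Icc.2 ⟨le_of_lt hy1.1, le_of_lt hy1.2⟩)
          exact this.hasDerivAt (Icc_mem_nhds hy1.1 hy1.2)
        exact this.hasDerivWithinAt
      · exact (hφc.mono hsub).intervalIntegrable_of_Icc (by linarith)
    show f (u + h) - f u = _
    rw [← key]
    rw [show ∫ τ in (0:ℝ)..h, φ (u + τ) = ∫ y in (u+0)..(u+h), φ y from
      (intervalIntegral.integral_comp_add_left (fun y => φ y) u)]
    norm_num
  | succ s ih =>
    intro u hu hub
    have e1 : (fdiff h)^[s+2] f u = (fdiff h)^[s+1] f (u + h) - (fdiff h)^[s+1] f u := by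
      rw [Function.iterate_succ_apply']; rfl
    have hu1 : (0:ℝ) ≤ u + h := by linarith
    have hub1 : (u + h) + (s+1)*h ≤ 1 := by push_cast at hub ⊢; linarith
    have hub2 : u + (s+1)*h ≤ 1 := by push_cast at hub ⊢; nlinarith [hh.le]
    rw [e1, ih (u+h) hu1 hub1, ih u hu hub2]
    -- continuity for integrability
    have hcont := fdiff_continuousOn s h hh.le φ 1 hφc
    have int1 : IntervalIntegrable (fun τ => (fdiff h)^[s] φ (u + h + τ)) MeasureTheory.volume 0 h := by
      apply ContinuousOn.intervalIntegrable_of_Icc hh.le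
      apply hcont.comp ((continuous_const.add continuous_id')).continuousOn
      intro τ hτ
      simp only [Set.mem_Icc, Pi.add_apply] at hτ ⊢
      constructor
      · linarith [hτ.1]
      · push_cast at hub; linarith [hτ.2]
    have int2 : IntervalIntegrable (fun τ => (fdiff h)^[s] φ (u + τ)) MeasureTheory.volume 0 h := by
      apply ContinuousOn.intervalIntegrable_of_Icc hh.le
      apply hcont.comp ((continuous_const.add continuous_id')).continuousOn
      intro τ hτ
      simp only [Set.mem_Icc, Pi.add_apply] at hτ ⊢
      constructor
      · linarith [hτ.1]
      · push_cast at hub; nlinarith [hτ.2, hh.le]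
    rw [← intervalIntegral.integral_sub int1 int2]
    apply intervalIntegral.integral_congr
    intro τ hτ
    show (fdiff h)^[s] φ (u + h + τ) - (fdiff h)^[s] φ (u + τ) = (fdiff h)^[s+1] φ (u + τ)
    rw [Function.iterate_succ_apply']
    show _ = (fdiff h)^[s] φ ((u + τ) + h) - (fdiff h)^[s] φ (u + τ)
    ring_nf

end FDiff
section LemB
variable {E : Type*} [NormedAddCommGroup E] [NormedSpace ℝ E] [CompleteSpace E]

lemma lemB : ∀ (s : ℕ) (Φ : ℕ → ℝ → E),
    (∀ k ≤ s, ∀ w ∈ Set.Icc (0:ℝ) 1, HasDerivWithinAt (Φ k) (Φ (k+1) w) (Set.Icc 0 1) w) →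
    (∀ k ≤ s+1, ContinuousOn (Φ k) (Set.Icc (0:ℝ) 1)) →
    ∀ L : ℝ, (∀ w ∈ Set.Icc (0:ℝ) 1, ‖Φ (s+1) w‖ ≤ L) →
    ∀ h u v : ℝ, 0 < h → 0 ≤ u → u + s*h ≤ 1 → v ∈ Set.Icc (0:ℝ) 1 →
    ‖(fdiff h)^[s] (Φ 0) u - h^s • Φ s v‖ ≤ L * h^s * (s*h + |u - v|) := by
  intro s
  induction s with
  | zero =>
    intro Φ hd _hc L hL h u v hh hu hub hv
    push_cast at hub
    simp only [Function.iterate_zero_apply, pow_zero, one_smul, Nat.cast_zero]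
    have hu' : u ∈ Set.Icc (0:ℝ) 1 := Set.mem_Icc.2 ⟨hu, by linarith⟩
    have := Convex.norm_image_sub_le_of_norm_hasDerivWithin_le
      (f := Φ 0) (f' := Φ 1) (C := L) (s := Set.Icc (0:ℝ) 1)
      (hd 0 le_rfl) hL (convex_Icc 0 1) hv hu'
    calc ‖Φ 0 u - Φ 0 v‖ ≤ L * ‖u - v‖ := this
    _ = L * 1 * (0*h + |u - v|) := by rw [Real.norm_eq_abs]; ring
  | succ s ih =>
    intro Φ hd hc L hL h u v hh hu hub hv
    push_cast at hub
    have hL0 : 0 ≤ L := le_trans (norm_nonneg _) (hL 0 (by simp))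
    -- rewrite via lemI
    have hrepr := lemI s (Φ 0) (Φ 1) (hc 1 (by omega)) (hc 0 (by omega))
      (hd 0 (by omega)) h hh u hu (by push_cast; linarith)
    have hconst : (h:ℝ)^(s+1) • Φ (s+1) v = ∫ τ in (0:ℝ)..h, h^s • Φ (s+1) v := by
      rw [intervalIntegral.integral_const, smul_smul, sub_zero, pow_succ]
      ring_nf
    rw [hrepr, hconst]
    have hcont := fdiff_continuousOn s h hh.le (Φ 1) 1 (hc 1 (by omega))
    have int1 : IntervalIntegrable (fun τ => (fdiff h)^[s] (Φ 1) (u + τ))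
        MeasureTheory.volume 0 h := by
      apply ContinuousOn.intervalIntegrable_of_Icc hh.le
      apply hcont.comp ((continuous_const.add continuous_id')).continuousOn
      intro τ hτ
      simp only [Set.mem_Icc, Pi.add_apply] at hτ ⊢
      exact ⟨by linarith [hτ.1], by nlinarith [hτ.2, hh.le]⟩
    rw [← intervalIntegral.integral_sub int1 intervalIntegrable_const]
    have hbound : ∀ τ ∈ Set.uIoc (0:ℝ) h,
        ‖(fdiff h)^[s] (Φ 1) (u + τ) - h^s • Φ (s+1) v‖
          ≤ L * h^s * (s*h + |u - v| + h) := by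
      intro τ hτ
      rw [Set.uIoc_of_le hh.le] at hτ
      have h1 := ih (fun k => Φ (k+1))
        (fun k hk w hw => hd (k+1) (by omega) w hw)
        (fun k hk => hc (k+1) (by omega)) L hL h (u+τ) v hh
        (by linarith [hτ.1.le]) (by push_cast; linarith [hτ.2]) hv
      refine le_trans h1 ?_
      have : |u + τ - v| ≤ |u - v| + h := by
        have := abs_add_le (u - v) τ
        have h2 : |τ| ≤ h := by rw [abs_of_pos hτ.1]; exact hτ.2
        calc |u + τ - v| = |(u - v) + τ| := by ring_nf
        _ ≤ |u - v| + |τ| := abs_add_le _ _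
        _ ≤ |u - v| + h := by linarith
      have hps : (0:ℝ) ≤ h^s := pow_nonneg hh.le s
      nlinarith [mul_nonneg hL0 hps]
    have := intervalIntegral.norm_integral_le_of_norm_le_const hbound
    refine le_trans this ?_
    rw [sub_zero, abs_of_pos hh]
    apply le_of_eq
    push_cast
    ring

end LemB
section LemC
variable {E : Type*} [NormedAddCommGroup E] [NormedSpace ℝ E]

lemma lemTaylor1 (φ φ' φ'' : ℝ → E)
    (hd1 : ∀ w ∈ Set.Icc (0:ℝ) 1, HasDerivWithinAt φ (φ' w) (Set.Icc 0 1) w)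
    (hd2 : ∀ w ∈ Set.Icc (0:ℝ) 1, HasDerivWithinAt φ' (φ'' w) (Set.Icc 0 1) w)
    (K2 : ℝ) (hK : ∀ w ∈ Set.Icc (0:ℝ) 1, ‖φ'' w‖ ≤ K2)
    (t y : ℝ) (ht : t ∈ Set.Icc (0:ℝ) 1) (hy : y ∈ Set.Icc (0:ℝ) 1) :
    ‖φ y - φ t - (y - t) • φ' t‖ ≤ K2 * (y - t)^2 := by
  have lip : ∀ a ∈ Set.Icc (0:ℝ) 1, ‖φ' a - φ' t‖ ≤ K2 * |a - t| := by
    intro a ha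
    have := Convex.norm_image_sub_le_of_norm_hasDerivWithin_le
      (f := φ') (f' := φ'') (C := K2) (s := Set.Icc (0:ℝ) 1)
      hd2 hK (convex_Icc 0 1) ht ha
    simpa [Real.norm_eq_abs] using this
  set S := Set.uIcc t y with hSdef
  have hS : S ⊆ Set.Icc (0:ℝ) 1 := Set.uIcc_subset_Icc ht hy
  set ψ : ℝ → E := fun z => φ z - (z - t) • φ' t with hψ
  have hdψ : ∀ z ∈ S, HasDerivWithinAt ψ (φ' z - φ' t) S z := by
    intro z hz
    have h1 := (hd1 z (hS hz)).mono hS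
    have h2 : HasDerivWithinAt (fun z : ℝ => (z - t) • φ' t) (φ' t) S z := by
      simpa using (((hasDerivWithinAt_id z S).sub_const t).smul_const (φ' t))
    exact h1.sub h2
  have hbound : ∀ z ∈ S, ‖φ' z - φ' t‖ ≤ K2 * |y - t| := by
    intro z hz
    have h1 := lip z (hS hz)
    have h2 : |z - t| ≤ |y - t| := by
      rcases Set.mem_uIcc.1 hz with ⟨h3, h4⟩ | ⟨h3, h4⟩
      · rw [abs_of_nonneg (by linarith), abs_of_nonneg (by linarith)]; linarith
      · rw [abs_of_nonpos (by linarith), abs_of_nonpos (by linarith)]; linarith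
    have hK0 : 0 ≤ K2 := le_trans (norm_nonneg _) (hK 0 (by simp))
    nlinarith
  have hMVT := Convex.norm_image_sub_le_of_norm_hasDerivWithin_le
    (f := ψ) (f' := fun z => φ' z - φ' t) (C := K2 * |y - t|) (s := S)
    hdψ hbound (convex_uIcc t y) (Set.left_mem_uIcc) (Set.right_mem_uIcc)
  have heq : φ y - φ t - (y - t) • φ' t = ψ y - ψ t := by
    simp only [hψ, sub_self, zero_smul, sub_zero]
    abel
  rw [heq]
  refine le_trans hMVT ?_
  rw [Real.norm_eq_abs]
  rw [show K2 * |y - t| * |y - t| = K2 * (|y - t|)^2 by ring, sq_abs]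

lemma lemC (M : ℕ) (hM : 1 ≤ M) (φ φ' φ'' : ℝ → E)
    (hd1 : ∀ w ∈ Set.Icc (0:ℝ) 1, HasDerivWithinAt φ (φ' w) (Set.Icc 0 1) w)
    (hd2 : ∀ w ∈ Set.Icc (0:ℝ) 1, HasDerivWithinAt φ' (φ'' w) (Set.Icc 0 1) w)
    (K2 : ℝ) (hK : ∀ w ∈ Set.Icc (0:ℝ) 1, ‖φ'' w‖ ≤ K2)
    (t : ℝ) (ht : t ∈ Set.Icc (0:ℝ) 1) :
    ‖(∑ j ∈ Finset.range (M+1), bern M j t • φ ((j:ℝ)/(M:ℝ))) - φ t‖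
      ≤ K2 * (t*(1-t)) / M := by
  have hM0 : (M:ℝ) ≠ 0 := by positivity
  have hMpos : (0:ℝ) < M := by exact_mod_cast hM
  have hmem : ∀ j ∈ Finset.range (M+1), ((j:ℝ)/(M:ℝ)) ∈ Set.Icc (0:ℝ) 1 := by
    intro j hj
    simp only [Finset.mem_range] at hj
    constructor
    · positivity
    · rw [div_le_one hMpos]; exact_mod_cast (by omega : j ≤ M)
  have e1 := bern_sum M t
  have S1 : ∑ j ∈ Finset.range (M+1), bern M j t * ((j:ℝ)/(M:ℝ) - t) = 0 := by
    have e2 := bern_sum_smul M t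
    have expand : ∀ j ∈ Finset.range (M+1), bern M j t * ((j:ℝ)/(M:ℝ) - t)
        = (1/(M:ℝ)) * ((j:ℝ) * bern M j t) - t * bern M j t := by
      intro j _; field_simp
    rw [Finset.sum_congr rfl expand, Finset.sum_sub_distrib, ← Finset.mul_sum,
      ← Finset.mul_sum, e1, e2]
    field_simp
    ring
  have S2 : ∑ j ∈ Finset.range (M+1), bern M j t * ((j:ℝ)/(M:ℝ) - t)^2 = t*(1-t)/M := by
    have e3 := bern_variance M t
    have expand : ∀ j ∈ Finset.range (M+1), bern M j t * ((j:ℝ)/(M:ℝ) - t)^2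
        = (1/(M:ℝ)^2) * (bern M j t * ((j:ℝ) - M*t)^2) := by
      intro j _; field_simp
    rw [Finset.sum_congr rfl expand, ← Finset.mul_sum, e3]
    field_simp
  have main : (∑ j ∈ Finset.range (M+1), bern M j t • φ ((j:ℝ)/(M:ℝ))) - φ t
      = ∑ j ∈ Finset.range (M+1),
          bern M j t • (φ ((j:ℝ)/(M:ℝ)) - φ t - ((j:ℝ)/(M:ℝ) - t) • φ' t) := by
    have expand : ∀ j ∈ Finset.range (M+1),
        bern M j t • (φ ((j:ℝ)/(M:ℝ)) - φ t - ((j:ℝ)/(M:ℝ) - t) • φ' t)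
        = bern M j t • φ ((j:ℝ)/(M:ℝ)) - bern M j t • φ t
            - (bern M j t * ((j:ℝ)/(M:ℝ) - t)) • φ' t := by
      intro j _
      rw [smul_sub, smul_sub, smul_smul]
    rw [Finset.sum_congr rfl expand, Finset.sum_sub_distrib, Finset.sum_sub_distrib,
      ← Finset.sum_smul, ← Finset.sum_smul, e1, S1, one_smul, zero_smul, sub_zero]
  rw [main]
  calc ‖∑ j ∈ Finset.range (M+1),
      bern M j t • (φ ((j:ℝ)/(M:ℝ)) - φ t - ((j:ℝ)/(M:ℝ) - t) • φ' t)‖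
      ≤ ∑ j ∈ Finset.range (M+1),
          ‖bern M j t • (φ ((j:ℝ)/(M:ℝ)) - φ t - ((j:ℝ)/(M:ℝ) - t) • φ' t)‖ :=
        norm_sum_le _ _
    _ ≤ ∑ j ∈ Finset.range (M+1), bern M j t * (K2 * ((j:ℝ)/(M:ℝ) - t)^2) := by
        apply Finset.sum_le_sum
        intro j hj
        rw [norm_smul, Real.norm_eq_abs, abs_of_nonneg (bern_nonneg ht.1 ht.2)]
        apply mul_le_mul_of_nonneg_left _ (bern_nonneg ht.1 ht.2)
        exact lemTaylor1 φ φ' φ'' hd1 hd2 K2 hK t ((j:ℝ)/(M:ℝ)) ht (hmem j hj)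
    _ = K2 * (t*(1-t)) / M := by
        have : ∀ j ∈ Finset.range (M+1), bern M j t * (K2 * ((j:ℝ)/(M:ℝ) - t)^2)
            = K2 * (bern M j t * ((j:ℝ)/(M:ℝ) - t)^2) := by intro j _; ring
        rw [Finset.sum_congr rfl this, ← Finset.mul_sum, S2]
        ring

end LemC
lemma one_sub_sum_le_prod (s : ℕ) (a : ℕ → ℝ)
    (h0 : ∀ i ∈ Finset.range s, 0 ≤ a i) (h1 : ∀ i ∈ Finset.range s, a i ≤ 1) :
    1 - ∑ i ∈ Finset.range s, a i ≤ ∏ i ∈ Finset.range s, (1 - a i) := by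
  induction s with
  | zero => simp
  | succ s ih =>
    have sub : ∀ i ∈ Finset.range s, i ∈ Finset.range (s+1) := by
      intro i hi; simp only [Finset.mem_range] at hi ⊢; omega
    have ih' := ih (fun i hi => h0 i (sub i hi)) (fun i hi => h1 i (sub i hi))
    rw [Finset.prod_range_succ, Finset.sum_range_succ]
    have hs0 : 0 ≤ ∑ i ∈ Finset.range s, a i :=
      Finset.sum_nonneg fun i hi => h0 i (sub i hi)
    have hmem : s ∈ Finset.range (s+1) := by simp
    nlinarith [h0 s hmem, h1 s hmem, ih']

end BernsteinAux

set_option maxHeartbeats 2000000 in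
/-- for an `(r+2)`-times continuously differentiable function
`x : [0,1] → ℝ^n`, the first `r` derivatives of the Bernstein approximation
converge at rate `1/N`, with constants independent of `N`. -/
theorem bernstein_approx_iteratedDeriv_rate (r n : ℕ)
    (x : ℝ → EuclideanSpace ℝ (Fin n))
    (hx : ContDiffOn ℝ ((r : ℕ∞) + 2) x (Set.Icc (0:ℝ) 1)) :
    ∃ C : ℕ → ℝ, (∀ s ≤ r, 0 < C s) ∧ ∃ N₀ : ℕ, ∀ N ≥ N₀,
      ∀ t ∈ Set.Icc (0:ℝ) 1, ∀ s ≤ r,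
        ‖iteratedDeriv s (bapprox N x) t
            - iteratedDerivWithin s x (Set.Icc (0:ℝ) 1) t‖ ≤ C s / (N : ℝ) := by
  have hUD : UniqueDiffOn ℝ (Set.Icc (0:ℝ) 1) := uniqueDiffOn_Icc (by norm_num)
  set Φ : ℕ → ℝ → EuclideanSpace ℝ (Fin n) :=
    fun k => iteratedDerivWithin k x (Set.Icc (0:ℝ) 1) with hΦ
  have hΦ0 : Φ 0 = x := iteratedDerivWithin_zero
  have hd : ∀ k ≤ r+1, ∀ w ∈ Set.Icc (0:ℝ) 1, HasDerivWithinAt (Φ k) (Φ (k+1) w)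
      (Set.Icc (0:ℝ) 1) w := by
    intro k hk w hw
    have hlt : (k : WithTop ℕ∞) < (((r : ℕ∞) + 2 : ℕ∞) : WithTop ℕ∞) := by
      have h1 : k < r + 2 := by omega
      have h2 : (k : ℕ∞) < ((r : ℕ∞) + 2) := by exact_mod_cast h1
      exact_mod_cast h2
    have hdiff := hx.differentiableOn_iteratedDerivWithin hlt hUD
    have := (hdiff w hw).hasDerivWithinAt
    rwa [← iteratedDerivWithin_succ] at this
  have hcΦ : ∀ k : ℕ, k ≤ r+2 → ContinuousOn (Φ k) (Set.Icc (0:ℝ) 1) := by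
    intro k hk
    apply hx.continuousOn_iteratedDerivWithin _ hUD
    have h2 : (k : WithTop ℕ∞) ≤ (((r : ℕ∞) + 2 : ℕ∞) : WithTop ℕ∞) := by
      have h3 : (k : ℕ∞) ≤ ((r : ℕ∞) + 2) := by exact_mod_cast hk
      exact_mod_cast h3
    exact h2
  have hLex : ∃ L : ℝ, 0 ≤ L ∧ ∀ k ≤ r+2, ∀ w ∈ Set.Icc (0:ℝ) 1, ‖Φ k w‖ ≤ L := by
    have H : ∀ m : ℕ, m ≤ r+2 → ∃ L, ∀ k ≤ m, ∀ w ∈ Set.Icc (0:ℝ) 1, ‖Φ k w‖ ≤ L := by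
      intro m
      induction m with
      | zero =>
        intro _
        obtain ⟨L, hL⟩ := isCompact_Icc.exists_bound_of_continuousOn (hcΦ 0 (by omega))
        exact ⟨L, fun k hk w hw => by rw [Nat.le_zero.1 hk]; exact hL w hw⟩
      | succ m ih =>
        intro hm
        obtain ⟨L1, hL1⟩ := ih (by omega)
        obtain ⟨L2, hL2⟩ := isCompact_Icc.exists_bound_of_continuousOn (hcΦ (m+1) hm)
        refine ⟨max L1 L2, fun k hk w hw => ?_⟩
        rcases Nat.lt_or_ge k (m+1) with hlt | hge
        · exact le_trans (hL1 k (by omega) w hw) (le_max_left _ _)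
        · have hkm : k = m+1 := by omega
          rw [hkm]
          exact le_trans (hL2 w hw) (le_max_right _ _)
    obtain ⟨L, hL⟩ := H (r+2) le_rfl
    exact ⟨max L 0, le_max_right _ _,
      fun k hk w hw => le_trans (hL k hk w hw) (le_max_left _ _)⟩
  obtain ⟨L, hL0, hL⟩ := hLex
  refine ⟨fun _ => 2*r*L + 2*L + r*r*L + 1, fun s _ => by positivity, 2*r + 2, ?_⟩
  intro N hN t ht s hsr
  have hNr : 2*r + 2 ≤ N := hN
  have hsN : s ≤ N := by omega
  have hNpos : (0:ℝ) < N := by exact_mod_cast (by omega : 0 < N)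
  have hN0 : (N:ℝ) ≠ 0 := hNpos.ne'
  set h : ℝ := 1/(N:ℝ) with hh
  have hhpos : 0 < h := by positivity
  set M : ℕ := N - s with hM
  have hM1 : 1 ≤ M := by omega
  have hMpos : (0:ℝ) < M := by exact_mod_cast (by omega : 0 < M)
  have hM0 : (M:ℝ) ≠ 0 := hMpos.ne'
  have hMcast : (M:ℝ) = (N:ℝ) - s := by rw [hM, Nat.cast_sub hsN]
  have hsr' : (s:ℝ) ≤ r := by exact_mod_cast hsr
  have hNr' : (2*r + 2 : ℝ) ≤ N := by exact_mod_cast hNr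
  have hr0 : (0:ℝ) ≤ r := Nat.cast_nonneg r
  have hNM : (N:ℝ) ≤ 2*M := by rw [hMcast]; linarith
  have hMN : (M:ℝ) ≤ N := by rw [hMcast]; linarith [hsr', hr0, (Nat.cast_nonneg s : (0:ℝ) ≤ s)]
  -- Lemma A
  have hA := congrFun (lemA N x s hsN) t
  rw [hA]
  set d : ℕ → EuclideanSpace ℝ (Fin n) :=
    fun j => (N:ℝ)^s • (fdiff h)^[s] x ((j:ℝ)/N) with hd'
  set P : ℝ := ∏ i ∈ Finset.range s, (1 - (i:ℝ)/N) with hP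
  have hiN : ∀ i ∈ Finset.range s, (0:ℝ) ≤ (i:ℝ)/N ∧ (i:ℝ)/N ≤ 1 := by
    intro i hi
    simp only [Finset.mem_range] at hi
    constructor
    · positivity
    · have h1 : (i:ℝ) ≤ N := by exact_mod_cast (by omega : i ≤ N)
      exact div_le_one_of_le₀ h1 hNpos.le
  have hprod : (∏ i ∈ Finset.range s, ((N:ℝ) - i)) = P * (N:ℝ)^s := by
    have e : ∀ i ∈ Finset.range s, ((N:ℝ) - i) = (1 - (i:ℝ)/N) * N := by
      intro i _; field_simp
    rw [Finset.prod_congr rfl e, Finset.prod_mul_distrib, Finset.prod_const,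
      Finset.card_range]
  have hP0 : 0 ≤ P := Finset.prod_nonneg fun i hi => by linarith [(hiN i hi).2]
  have hP1 : P ≤ 1 :=
    Finset.prod_le_one (fun i hi => by linarith [(hiN i hi).2])
      (fun i hi => by linarith [(hiN i hi).1])
  have hP2 : 1 - P ≤ (r:ℝ)*r/N := by
    have key := one_sub_sum_le_prod s (fun i => (i:ℝ)/N)
      (fun i hi => (hiN i hi).1) (fun i hi => (hiN i hi).2)
    have hsum : ∑ i ∈ Finset.range s, (i:ℝ)/N ≤ (r:ℝ)*r/N := by
      calc ∑ i ∈ Finset.range s, (i:ℝ)/N ≤ ∑ _i ∈ Finset.range s, (r:ℝ)/N := by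
            apply Finset.sum_le_sum
            intro i hi
            simp only [Finset.mem_range] at hi
            gcongr
            exact_mod_cast (by omega : i ≤ r)
        _ = s * ((r:ℝ)/N) := by rw [Finset.sum_const, Finset.card_range, nsmul_eq_mul]
        _ ≤ r * ((r:ℝ)/N) := by
            have h2 : 0 ≤ (r:ℝ)/N := by positivity
            nlinarith
        _ = (r:ℝ)*r/N := by ring
    linarith
  -- rewrite the main term
  have hrw : (∏ i ∈ Finset.range s, ((N:ℝ) - i)) •
        ∑ j ∈ Finset.range (N - s + 1), bern (N-s) j t • (fdiff (1/(N:ℝ)))^[s] x ((j:ℝ)/(N:ℝ))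
      = P • ∑ j ∈ Finset.range (M+1), bern M j t • d j := by
    rw [hprod, mul_smul]
    congr 1
    rw [Finset.smul_sum]
    refine Finset.sum_congr rfl fun j hj => ?_
    rw [hd']
    rw [smul_comm]
  rw [hrw]
  -- per-j bound via lemB
  have hdj : ∀ j ∈ Finset.range (M+1), ‖d j - Φ s ((j:ℝ)/M)‖ ≤ L * (2*r) / N := by
    intro j hj
    simp only [Finset.mem_range] at hj
    have hjM : j ≤ M := by omega
    have hjM' : (j:ℝ) ≤ M := by exact_mod_cast hjM
    have hvmem : ((j:ℝ)/M) ∈ Set.Icc (0:ℝ) 1 :=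
      ⟨by positivity, div_le_one_of_le₀ hjM' hMpos.le⟩
    have hu0 : (0:ℝ) ≤ (j:ℝ)/N := by positivity
    have hub : (j:ℝ)/N + s*h ≤ 1 := by
      rw [hh]
      have : (j:ℝ) + s ≤ N := by
        rw [hMcast] at hjM'; linarith
      calc (j:ℝ)/N + s*(1/N) = ((j:ℝ) + s)/N := by field_simp
        _ ≤ (N:ℝ)/N := by gcongr
        _ = 1 := by field_simp
    have hlemB := lemB s Φ
      (fun k hk w hw => hd k (by omega) w hw)
      (fun k hk => hcΦ k (by omega))
      L (fun w hw => hL (s+1) (by omega) w hw)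
      h ((j:ℝ)/N) ((j:ℝ)/M) hhpos hu0 hub hvmem
    rw [hΦ0] at hlemB
    have hNh : (N:ℝ)^s * h^s = 1 := by
      rw [hh, ← mul_pow]
      field_simp
      exact one_pow s
    have hrepr : d j - Φ s ((j:ℝ)/M)
        = (N:ℝ)^s • ((fdiff h)^[s] x ((j:ℝ)/N) - h^s • Φ s ((j:ℝ)/M)) := by
      rw [smul_sub, hd', smul_smul, hNh, one_smul]
    rw [hrepr, norm_smul, Real.norm_eq_abs, abs_of_pos (by positivity : (0:ℝ) < (N:ℝ)^s)]
    have huv : |(j:ℝ)/N - (j:ℝ)/M| ≤ (s:ℝ)/N := by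
      have hdiff : (j:ℝ)/M - (j:ℝ)/N = (j:ℝ)*(s:ℝ)/((N:ℝ)*(M:ℝ)) := by
        have e : (s:ℝ) = (N:ℝ) - (M:ℝ) := by rw [hMcast]; ring
        rw [e]
        field_simp
      rw [abs_sub_comm, hdiff, abs_of_nonneg (by positivity)]
      calc (j:ℝ)*(s:ℝ)/((N:ℝ)*(M:ℝ)) ≤ (M:ℝ)*(s:ℝ)/((N:ℝ)*(M:ℝ)) := by
            gcongr
        _ = (s:ℝ)/N := by field_simp
    calc (N:ℝ)^s * ‖(fdiff h)^[s] x ((j:ℝ)/N) - h^s • Φ s ((j:ℝ)/M)‖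
        ≤ (N:ℝ)^s * (L * h^s * (s*h + |(j:ℝ)/N - (j:ℝ)/M|)) := by
          apply mul_le_mul_of_nonneg_left hlemB (by positivity)
      _ = L * ((N:ℝ)^s * h^s) * (s*h + |(j:ℝ)/N - (j:ℝ)/M|) := by ring
      _ = L * (s*h + |(j:ℝ)/N - (j:ℝ)/M|) := by rw [hNh]; ring
      _ ≤ L * ((s:ℝ)/N + (s:ℝ)/N) := by
          apply mul_le_mul_of_nonneg_left _ hL0
          have : (s:ℝ)*h = (s:ℝ)/N := by rw [hh]; ring
          linarith [huv, this.le, this.ge]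
      _ ≤ L * (2*r) / N := by
          rw [← add_div]
          have h1 : (s:ℝ) + s ≤ 2*r := by linarith
          rw [mul_div_assoc]
          apply mul_le_mul_of_nonneg_left _ hL0
          gcongr
    done
  -- step 5/6/7
  set SD : EuclideanSpace ℝ (Fin n) := ∑ j ∈ Finset.range (M+1), bern M j t • d j with hSD
  set SP : EuclideanSpace ℝ (Fin n) :=
    ∑ j ∈ Finset.range (M+1), bern M j t • Φ s ((j:ℝ)/M) with hSP
  have hT : ‖SD - SP‖ ≤ L*(2*r)/N := by
    rw [hSD, hSP, ← Finset.sum_sub_distrib]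
    calc ‖∑ j ∈ Finset.range (M+1), (bern M j t • d j - bern M j t • Φ s ((j:ℝ)/M))‖
        ≤ ∑ j ∈ Finset.range (M+1), ‖bern M j t • d j - bern M j t • Φ s ((j:ℝ)/M)‖ :=
          norm_sum_le _ _
      _ ≤ ∑ j ∈ Finset.range (M+1), bern M j t * (L*(2*r)/N) := by
          apply Finset.sum_le_sum
          intro j hj
          rw [← smul_sub, norm_smul, Real.norm_eq_abs, abs_of_nonneg (bern_nonneg ht.1 ht.2)]
          exact mul_le_mul_of_nonneg_left (hdj j hj) (bern_nonneg ht.1 ht.2)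
      _ = L*(2*r)/N := by rw [← Finset.sum_mul, bern_sum M t, one_mul]
  have hU : ‖SP - Φ s t‖ ≤ L*2/N := by
    have hC := lemC M hM1 (Φ s) (Φ (s+1)) (Φ (s+2))
      (fun w hw => hd s (by omega) w hw) (fun w hw => hd (s+1) (by omega) w hw)
      L (fun w hw => hL (s+2) (by omega) w hw) t ht
    refine le_trans hC ?_
    have ht1 : t*(1-t) ≤ 1 := by nlinarith [ht.1, ht.2]
    have ht2 : 0 ≤ t*(1-t) := by nlinarith [ht.1, ht.2]
    rw [div_le_div_iff₀ hMpos hNpos]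
    have k1 : L*(t*(1-t)) ≤ L := by nlinarith [hL0, ht1, ht2]
    calc L*(t*(1-t))*N ≤ L*N := mul_le_mul_of_nonneg_right k1 hNpos.le
      _ ≤ L*(2*M) := mul_le_mul_of_nonneg_left hNM hL0
      _ = L*2*M := by ring
  have hdecomp : P • SD - Φ s t
      = P • (SD - SP) + P • (SP - Φ s t) + (P - 1) • Φ s t := by
    rw [smul_sub, smul_sub, sub_smul, one_smul]
    abel
  rw [hdecomp]
  have b1 : ‖P • (SD - SP)‖ ≤ L*(2*r)/N := by
    rw [norm_smul, Real.norm_eq_abs, abs_of_nonneg hP0]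
    calc P * ‖SD - SP‖ ≤ 1 * (L*(2*r)/N) :=
          mul_le_mul hP1 hT (norm_nonneg _) (by norm_num)
      _ = L*(2*r)/N := one_mul _
  have b2 : ‖P • (SP - Φ s t)‖ ≤ L*2/N := by
    rw [norm_smul, Real.norm_eq_abs, abs_of_nonneg hP0]
    calc P * ‖SP - Φ s t‖ ≤ 1 * (L*2/N) :=
          mul_le_mul hP1 hU (norm_nonneg _) (by norm_num)
      _ = L*2/N := one_mul _
  have b3 : ‖(P - 1) • Φ s t‖ ≤ ((r:ℝ)*r/N)*L := by
    rw [norm_smul, Real.norm_eq_abs, abs_of_nonpos (by linarith : P - 1 ≤ 0)]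
    have h1 : -(P-1) ≤ (r:ℝ)*r/N := by linarith
    have h2 : ‖Φ s t‖ ≤ L := hL s (by omega) t ht
    have h3 : (0:ℝ) ≤ -(P-1) := by linarith
    exact mul_le_mul h1 h2 (norm_nonneg _) (by positivity)
  calc ‖P • (SD - SP) + P • (SP - Φ s t) + (P - 1) • Φ s t‖
      ≤ ‖P • (SD - SP)‖ + ‖P • (SP - Φ s t)‖ + ‖(P - 1) • Φ s t‖ := norm_add₃_le
    _ ≤ L*(2*r)/N + L*2/N + ((r:ℝ)*r/N)*L := by linarith [b1, b2, b3]
    _ = (2*(r:ℝ)*L + 2*L + (r:ℝ)*r*L)/N := by field_simp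
    _ ≤ (2*(r:ℝ)*L + 2*L + (r:ℝ)*r*L + 1)/N := by
        rw [div_le_div_iff₀ hNpos hNpos]
        nlinarith [hNpos, hL0, hr0, mul_nonneg (mul_nonneg hr0 hr0) hL0,
          mul_nonneg hr0 hL0]
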